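/- (Invariant Preservation) Let σ be a valid non-initial composite state of the asynchronous muddy-children protocol, with muddy set M = ⋃_i Obs(σ_i) and N = |M|. Then for every component i with running state σ_i = ⟨Obs_i, r_i, status_i⟩: if status_i = u then r_i < |Obs_i| and |Obs_i| ≤ N; if status_i = m then r_i = N − 1 = |Obs_i|; and if status_i = c then r_i = N = |Obs_i|. -/

import Mathlib

/-- Epistemic status of a child: unknown, muddy, or clean. -/
inductive Status : Type
  | u | m | c

/-- A message ⟨j, r, status⟩. -/
structure Msg (n : ℕ) : Type where
  sender : Fin n
  round : ℕ
  status : Status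

/-- A child's state: initial ⟨Obs⟩ or running ⟨Obs, r, status⟩. -/
inductive ChildState (n : ℕ) : Type
  | start (Obs : Finset (Fin n))
  | run (Obs : Finset (Fin n)) (r : ℕ) (st : Status)

open Status ChildState

/-- Observation set of a child state. -/
def ChildState.obs {n : ℕ} : ChildState n → Finset (Fin n)
  | .start O => O
  | .run O _ _ => O

/-- A composite state. -/
abbrev CState (n : ℕ) := Fin n → ChildState n

/-- The set M of muddy children determined by a composite state. -/
def muddySet {n : ℕ} (σ : CState n) : Finset (Fin n) :=
  Finset.univ.biUnion fun i => (σ i).obs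

/-- consistent(σ): M nonempty and every child sees exactly M \ {i}. -/
def consistent {n : ℕ} (σ : CState n) : Prop :=
  (muddySet σ).Nonempty ∧ ∀ i, (σ i).obs = muddySet σ \ {i}

/-- The constrained local transitions of child `i` (labels init/emit/receive). -/
inductive LocalStep {n : ℕ} (i : Fin n) :
    ChildState n → Option (Msg n) → ChildState n → Option (Msg n) → Prop
  | init_nonempty (O : Finset (Fin n)) (h : O ≠ ∅) :
      LocalStep i (start O) none (run O 0 u) none
  | init_empty (O : Finset (Fin n)) (h : O = ∅) :
      LocalStep i (start O) none (run O 0 m) none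
  | emit (O : Finset (Fin n)) (r : ℕ) (s : Status) :
      LocalStep i (run O r s) none (run O r s) (some ⟨i, r, s⟩)
  | recv_decided (O : Finset (Fin n)) (r : ℕ) (s : Status) (mg : Msg n) (h : s ≠ u) :
      LocalStep i (run O r s) (some mg) (run O r s) none
  | recv_c_eq (O : Finset (Fin n)) (r : ℕ) (j : Fin n) (r' : ℕ)
      (hj : j ∉ O) (hr : r' = O.card) :
      LocalStep i (run O r u) (some ⟨j, r', c⟩) (run O r' c) none
  | recv_c_succ (O : Finset (Fin n)) (r : ℕ) (j : Fin n) (r' : ℕ)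
      (hj : j ∉ O) (hr : r' = O.card + 1) :
      LocalStep i (run O r u) (some ⟨j, r', c⟩) (run O (r' - 1) m) none
  | recv_m_eq (O : Finset (Fin n)) (r : ℕ) (j : Fin n) (r' : ℕ)
      (hj : j ∈ O) (hr : r' = O.card) :
      LocalStep i (run O r u) (some ⟨j, r', m⟩) (run O r' m) none
  | recv_m_pred (O : Finset (Fin n)) (r : ℕ) (j : Fin n) (r' : ℕ)
      (hj : j ∈ O) (hr : r' = O.card - 1) :
      LocalStep i (run O r u) (some ⟨j, r', m⟩) (run O (r' + 1) c) none
  | recv_u_in_lt (O : Finset (Fin n)) (r : ℕ) (j : Fin n) (r' : ℕ)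
      (hj : j ∈ O) (hr : r' < r) :
      LocalStep i (run O r u) (some ⟨j, r', u⟩) (run O r u) none
  | recv_u_in_mid (O : Finset (Fin n)) (r : ℕ) (j : Fin n) (r' : ℕ)
      (hj : j ∈ O) (h1 : r ≤ r') (h2 : r' < O.card - 1) :
      LocalStep i (run O r u) (some ⟨j, r', u⟩) (run O (r' + 1) u) none
  | recv_u_in_top (O : Finset (Fin n)) (r : ℕ) (j : Fin n) (r' : ℕ)
      (hj : j ∈ O) (hr : r' = O.card - 1) :
      LocalStep i (run O r u) (some ⟨j, r', u⟩) (run O (r' + 1) m) none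
  | recv_u_out_le (O : Finset (Fin n)) (r : ℕ) (j : Fin n) (r' : ℕ)
      (hj : j ∉ O) (hr : r' ≤ r) :
      LocalStep i (run O r u) (some ⟨j, r', u⟩) (run O r u) none
  | recv_u_out_mid (O : Finset (Fin n)) (r : ℕ) (j : Fin n) (r' : ℕ)
      (hj : j ∉ O) (h1 : r < r') (h2 : r' < O.card) :
      LocalStep i (run O r u) (some ⟨j, r', u⟩) (run O r' u) none
  | recv_u_out_top (O : Finset (Fin n)) (r : ℕ) (j : Fin n) (r' : ℕ)
      (hj : j ∉ O) (hr : r' = O.card) :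
      LocalStep i (run O r u) (some ⟨j, r', u⟩) (run O r' m) none

/-- The no-equivocation condition on an input message: the sender must be in a
running state matching the message (or a state strictly ahead of an unknown-status message). -/
def senderOK {n : ℕ} (σ : CState n) (mg : Msg n) : Prop :=
  ∃ (O : Finset (Fin n)) (rj : ℕ) (sj : Status),
    σ mg.sender = run O rj sj ∧
      ((mg.status = sj ∧ mg.round = rj) ∨ (mg.status = u ∧ mg.round < rj))

/-- The composition constraint: init transitions require consistency of the
composite state, receives require the no-equivocation condition. -/
def stepConstraint {n : ℕ} (σ : CState n) (i : Fin n) (inp : Option (Msg n)) : Prop :=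
  ((∃ O, σ i = start O) → consistent σ) ∧ ∀ mg, inp = some mg → senderOK σ mg

/-- Constrained transitions of the composite system: component `i` takes a local
transition, subject to the composition constraint. -/
inductive CStep {n : ℕ} :
    CState n → Fin n → Option (Msg n) → CState n → Option (Msg n) → Prop
  | mk (σ : CState n) (i : Fin n) (inp : Option (Msg n)) (s' : ChildState n)
      (out : Option (Msg n))
      (hl : LocalStep i (σ i) inp s' out) (hc : stepConstraint σ i inp) :
      CStep σ i inp (Function.update σ i s') out

/-- A recorded transition: acting component, input message, output message. -/
abbrev Transition (n : ℕ) := Fin n × Option (Msg n) × Option (Msg n)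

/-- A composite state is initial when all components are in initial states. -/
def isInitial {n : ℕ} (σ : CState n) : Prop := ∀ i, ∃ O, σ i = start O

/-- The trace `tr` emits the message `mg`. -/
def emits {n : ℕ} (tr : List (Transition n)) (mg : Msg n) : Prop :=
  ∃ i inp, (i, inp, some mg) ∈ tr

/-- The message `mg` is an input of some transition of the trace `tr`. -/
def isInput {n : ℕ} (tr : List (Transition n)) (mg : Msg n) : Prop :=
  ∃ i out, (i, some mg, out) ∈ tr

/-- Constrained traces: sequences of constrained transitions from `σ0`. -/
inductive ConstrainedTrace {n : ℕ} (σ0 : CState n) :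
    List (Transition n) → CState n → Prop
  | nil : ConstrainedTrace σ0 [] σ0
  | snoc (tr : List (Transition n)) (σ : CState n) (i : Fin n)
      (inp : Option (Msg n)) (σ' : CState n) (out : Option (Msg n))
      (htr : ConstrainedTrace σ0 tr σ)
      (hstep : CStep σ i inp σ' out) :
      ConstrainedTrace σ0 (tr ++ [(i, inp, out)]) σ'

/-- Valid messages from the initial composite state `σ0`: messages emitted by a
constrained trace from `σ0` all of whose input messages are themselves valid,
i.e., emitted by valid traces from `σ0`. -/
inductive ValidMsg {n : ℕ} (σ0 : CState n) : Msg n → Prop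
  | intro (mg : Msg n) (tr : List (Transition n)) (σ : CState n)
      (h0 : isInitial σ0)
      (hct : ConstrainedTrace σ0 tr σ)
      (hin : ∀ mg', isInput tr mg' → ValidMsg σ0 mg')
      (hem : emits tr mg) : ValidMsg σ0 mg

/-- Valid traces from `σ0`: constrained traces from an initial composite state
in which every input message can be emitted by some valid trace from `σ0`. -/
def ValidTrace {n : ℕ} (σ0 : CState n) (tr : List (Transition n)) (σ : CState n) : Prop :=
  isInitial σ0 ∧ ConstrainedTrace σ0 tr σ ∧ ∀ mg, isInput tr mg → ValidMsg σ0 mg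

/-- Status of a running child state. -/
def ChildState.status? {n : ℕ} : ChildState n → Option Status
  | .start _ => none
  | .run _ _ s => some s

/-- A composite state is final when every component knows its status. -/
def isFinal {n : ℕ} (σ : CState n) : Prop :=
  ∀ i, ∃ (O : Finset (Fin n)) (r : ℕ) (s : Status), σ i = run O r s ∧ s ≠ u

/-- Round of a child state, with initial states at round -1. -/
def roundZ {n : ℕ} : ChildState n → ℤ
  | .start _ => -1
  | .run _ r _ => (r : ℤ)


section Aux

variable {n : ℕ}

lemma LocalStep.obs_eq {i : Fin n} {s s' : ChildState n} {inp out : Option (Msg n)}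
    (h : LocalStep i s inp s' out) : s'.obs = s.obs := by
  cases h <;> rfl

lemma muddySet_congr {σ σ' : CState n} (h : ∀ k, (σ' k).obs = (σ k).obs) :
    muddySet σ' = muddySet σ :=
  Finset.biUnion_congr rfl (fun k _ => h k)

lemma consistent_congr {σ σ' : CState n} (h : ∀ k, (σ' k).obs = (σ k).obs)
    (hc : consistent σ) : consistent σ' := by
  obtain ⟨h1, h2⟩ := hc
  refine ⟨by rw [muddySet_congr h]; exact h1, fun i => ?_⟩
  rw [muddySet_congr h, h i]; exact h2 i

/-- The per-component invariant. -/
def goodAt (N : ℕ) (O : Finset (Fin n)) (r : ℕ) (s : Status) : Prop :=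
  (s = Status.u → r < O.card ∧ O.card ≤ N) ∧
  (s = Status.m → r = N - 1 ∧ N - 1 = O.card) ∧
  (s = Status.c → r = N ∧ N = O.card)

lemma goodAt_u {N : ℕ} {O : Finset (Fin n)} {r : ℕ} (h : r < O.card ∧ O.card ≤ N) :
    goodAt N O r Status.u :=
  ⟨fun _ => h, fun h' => Status.noConfusion h', fun h' => Status.noConfusion h'⟩

lemma goodAt_m {N : ℕ} {O : Finset (Fin n)} {r : ℕ} (h : r = N - 1 ∧ N - 1 = O.card) :
    goodAt N O r Status.m :=
  ⟨fun h' => Status.noConfusion h', fun _ => h, fun h' => Status.noConfusion h'⟩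

lemma goodAt_c {N : ℕ} {O : Finset (Fin n)} {r : ℕ} (h : r = N ∧ N = O.card) :
    goodAt N O r Status.c :=
  ⟨fun h' => Status.noConfusion h', fun h' => Status.noConfusion h', fun _ => h⟩

/-- The composite invariant. -/
def MCInv (σ : CState n) : Prop :=
  (∃ i O r s, σ i = run O r s) →
    consistent σ ∧ ∀ i O r s, σ i = run O r s → goodAt (muddySet σ).card O r s

lemma obs_card_facts {M O : Finset (Fin n)} {i : Fin n} (hO : O = M \ {i}) :
    (i ∈ M → O.card + 1 = M.card) ∧ (i ∉ M → O.card = M.card) := by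
  subst hO
  constructor
  · intro hi
    rw [Finset.card_sdiff_of_subset (Finset.singleton_subset_iff.mpr hi), Finset.card_singleton]
    have : 1 ≤ M.card := Finset.card_pos.mpr ⟨i, hi⟩
    omega
  · intro hi
    rw [Finset.sdiff_eq_self_iff_disjoint.mpr (by simpa using hi)]

lemma assemble {σ : CState n} {i : Fin n} {s' : ChildState n}
    (hobs : ∀ k, ((Function.update σ i s') k).obs = (σ k).obs)
    (hcons : consistent σ)
    (hprop : ∀ k Ok rk sk, σ k = run Ok rk sk → goodAt (muddySet σ).card Ok rk sk)
    (hnew : ∀ Ok rk sk, s' = run Ok rk sk → goodAt (muddySet σ).card Ok rk sk) :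
    consistent (Function.update σ i s') ∧
      ∀ k Ok rk sk, (Function.update σ i s') k = run Ok rk sk →
        goodAt (muddySet (Function.update σ i s')).card Ok rk sk := by
  refine ⟨consistent_congr hobs hcons, ?_⟩
  intro k Ok rk sk hk
  rw [muddySet_congr hobs]
  rcases eq_or_ne k i with rfl | hki
  · rw [Function.update_self] at hk; exact hnew _ _ _ hk
  · rw [Function.update_of_ne hki] at hk; exact hprop _ _ _ _ hk

lemma inv_preserved {σ0 σ : CState n} {tr : List (Transition n)}
    (h0 : isInitial σ0) (htr : ConstrainedTrace σ0 tr σ) : MCInv σ := by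
  induction htr with
  | nil =>
    rintro ⟨i, O, r, s, hi⟩
    obtain ⟨O', hO'⟩ := h0 i
    rw [hO'] at hi
    cases hi
  | snoc tr σ i inp σ' out htr hstep ih =>
    clear htr
    cases hstep with
    | mk s' w hl hc =>
      have hobs : ∀ k, ((Function.update σ i s') k).obs = (σ k).obs := by
        intro k
        rcases eq_or_ne k i with rfl | hk
        · rw [Function.update_self]; exact hl.obs_eq
        · rw [Function.update_of_ne hk]
      intro _hex
      have hprop : ∀ k Ok rk sk, σ k = run Ok rk sk → goodAt (muddySet σ).card Ok rk sk :=
        fun k Ok rk sk hk => (ih ⟨k, Ok, rk, sk, hk⟩).2 k Ok rk sk hk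
      generalize hsi : σ i = si at hl
      cases hl with
      | init_nonempty O hO =>
        have hcons : consistent σ := hc.1 ⟨O, hsi⟩
        have hOeq : O = muddySet σ \ {i} := by
          have h := hcons.2 i; rw [hsi] at h; exact h
        refine assemble hobs hcons hprop ?_
        rintro Ok rk sk hk
        injection hk with h1 h2 h3
        subst h1; subst h2; subst h3
        refine goodAt_u ⟨Finset.card_pos.mpr (Finset.nonempty_of_ne_empty hO), ?_⟩
        rw [hOeq]; exact Finset.card_le_card Finset.sdiff_subset
      | init_empty O hO =>
        have hcons : consistent σ := hc.1 ⟨O, hsi⟩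
        have hOeq : O = muddySet σ \ {i} := by
          have h := hcons.2 i; rw [hsi] at h; exact h
        have hM1 : (muddySet σ).card = 1 := by
          have h1 : muddySet σ ⊆ {i} := by
            intro x hx
            by_contra hxi
            have hxO : x ∈ O := by
              rw [hOeq]; exact Finset.mem_sdiff.mpr ⟨hx, hxi⟩
            rw [hO] at hxO
            exact absurd hxO (Finset.notMem_empty x)
          have h2 := Finset.card_le_card h1
          have h3 : 1 ≤ (muddySet σ).card := Finset.card_pos.mpr hcons.1
          rw [Finset.card_singleton] at h2
          omega
        refine assemble hobs hcons hprop ?_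
        rintro Ok rk sk hk
        injection hk with h1 h2 h3
        subst h1; subst h2; subst h3
        exact goodAt_m ⟨by omega, by simp [hO, hM1]⟩
      | emit O r s =>
        have hcons : consistent σ := (ih ⟨i, O, r, s, hsi⟩).1
        refine assemble hobs hcons hprop ?_
        rintro Ok rk sk hk
        exact hprop i Ok rk sk (hsi.trans hk)
      | recv_decided O r s mg hs =>
        have hcons : consistent σ := (ih ⟨i, O, r, s, hsi⟩).1
        refine assemble hobs hcons hprop ?_
        rintro Ok rk sk hk
        exact hprop i Ok rk sk (hsi.trans hk)
      | recv_c_eq O r j r' hj hr =>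
        have hcons : consistent σ := (ih ⟨i, O, r, Status.u, hsi⟩).1
        obtain ⟨Oj, rj, sj, hσj, hmatch⟩ := hc.2 _ rfl
        have hmatch' : (Status.c = sj ∧ r' = rj) ∨ (Status.c = Status.u ∧ r' < rj) := hmatch
        rcases hmatch' with ⟨hs, hreq⟩ | ⟨hs, _⟩
        · subst hs
          obtain ⟨hj1, hj2⟩ := (hprop j Oj rj _ hσj).2.2 rfl
          refine assemble hobs hcons hprop ?_
          rintro Ok rk sk hk
          injection hk with h1 h2 h3
          subst h1; subst h2; subst h3
          exact goodAt_c ⟨by omega, by omega⟩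
        · exact Status.noConfusion hs
      | recv_c_succ O r j r' hj hr =>
        have hcons : consistent σ := (ih ⟨i, O, r, Status.u, hsi⟩).1
        obtain ⟨Oj, rj, sj, hσj, hmatch⟩ := hc.2 _ rfl
        have hmatch' : (Status.c = sj ∧ r' = rj) ∨ (Status.c = Status.u ∧ r' < rj) := hmatch
        rcases hmatch' with ⟨hs, hreq⟩ | ⟨hs, _⟩
        · subst hs
          obtain ⟨hj1, hj2⟩ := (hprop j Oj rj _ hσj).2.2 rfl
          refine assemble hobs hcons hprop ?_
          rintro Ok rk sk hk
          injection hk with h1 h2 h3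
          subst h1; subst h2; subst h3
          exact goodAt_m ⟨by omega, by omega⟩
        · exact Status.noConfusion hs
      | recv_m_eq O r j r' hj hr =>
        have hcons : consistent σ := (ih ⟨i, O, r, Status.u, hsi⟩).1
        obtain ⟨Oj, rj, sj, hσj, hmatch⟩ := hc.2 _ rfl
        have hmatch' : (Status.m = sj ∧ r' = rj) ∨ (Status.m = Status.u ∧ r' < rj) := hmatch
        rcases hmatch' with ⟨hs, hreq⟩ | ⟨hs, _⟩
        · subst hs
          obtain ⟨hj1, hj2⟩ := (hprop j Oj rj _ hσj).2.1 rfl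
          refine assemble hobs hcons hprop ?_
          rintro Ok rk sk hk
          injection hk with h1 h2 h3
          subst h1; subst h2; subst h3
          exact goodAt_m ⟨by omega, by omega⟩
        · exact Status.noConfusion hs
      | recv_m_pred O r j r' hj hr =>
        have hcons : consistent σ := (ih ⟨i, O, r, Status.u, hsi⟩).1
        have hN1 : 1 ≤ (muddySet σ).card := Finset.card_pos.mpr hcons.1
        have hO1 : 1 ≤ O.card := Finset.card_pos.mpr ⟨j, hj⟩
        obtain ⟨Oj, rj, sj, hσj, hmatch⟩ := hc.2 _ rfl
        have hmatch' : (Status.m = sj ∧ r' = rj) ∨ (Status.m = Status.u ∧ r' < rj) := hmatch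
        rcases hmatch' with ⟨hs, hreq⟩ | ⟨hs, _⟩
        · subst hs
          obtain ⟨hj1, hj2⟩ := (hprop j Oj rj _ hσj).2.1 rfl
          refine assemble hobs hcons hprop ?_
          rintro Ok rk sk hk
          injection hk with h1 h2 h3
          subst h1; subst h2; subst h3
          exact goodAt_c ⟨by omega, by omega⟩
        · exact Status.noConfusion hs
      | recv_u_in_lt O r j r' hj hr =>
        have hcons : consistent σ := (ih ⟨i, O, r, Status.u, hsi⟩).1
        refine assemble hobs hcons hprop ?_
        rintro Ok rk sk hk
        injection hk with h1 h2 h3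
        subst h1; subst h2; subst h3
        exact goodAt_u ((hprop i O r _ hsi).1 rfl)
      | recv_u_in_mid O r j r' hj h1' h2' =>
        have hcons : consistent σ := (ih ⟨i, O, r, Status.u, hsi⟩).1
        obtain ⟨hra, hON⟩ := (hprop i O r _ hsi).1 rfl
        refine assemble hobs hcons hprop ?_
        rintro Ok rk sk hk
        injection hk with h1 h2 h3
        subst h1; subst h2; subst h3
        exact goodAt_u ⟨by omega, hON⟩
      | recv_u_in_top O r j r' hj hr =>
        have hcons : consistent σ := (ih ⟨i, O, r, Status.u, hsi⟩).1
        have hO1 : 1 ≤ O.card := Finset.card_pos.mpr ⟨j, hj⟩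
        have hOeq : O = muddySet σ \ {i} := by
          have h := hcons.2 i; rw [hsi] at h; exact h
        have hjM : j ∈ muddySet σ := by
          rw [hOeq] at hj
          exact (Finset.mem_sdiff.mp hj).1
        obtain ⟨Oj, rj, sj, hσj, hmatch⟩ := hc.2 _ rfl
        have hOj : Oj = muddySet σ \ {j} := by
          have h := hcons.2 j; rw [hσj] at h; exact h
        have hOjc : Oj.card + 1 = (muddySet σ).card := (obs_card_facts hOj).1 hjM
        have hmatch' : (Status.u = sj ∧ r' = rj) ∨ (Status.u = Status.u ∧ r' < rj) := hmatch
        have hpj := hprop j Oj rj sj hσj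
        have hr'N : r' + 2 ≤ (muddySet σ).card := by
          rcases hmatch' with ⟨hs, hreq⟩ | ⟨_, hreq⟩
          · subst hs
            obtain ⟨ha, hb⟩ := hpj.1 rfl
            omega
          · cases sj
            · obtain ⟨ha, hb⟩ := hpj.1 rfl; omega
            · obtain ⟨ha, hb⟩ := hpj.2.1 rfl; omega
            · obtain ⟨ha, hb⟩ := hpj.2.2 rfl; omega
        have hiM : i ∈ muddySet σ := by
          by_contra hiM
          have hOc := (obs_card_facts hOeq).2 hiM
          omega
        have hOc : O.card + 1 = (muddySet σ).card := (obs_card_facts hOeq).1 hiM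
        refine assemble hobs hcons hprop ?_
        rintro Ok rk sk hk
        injection hk with h1 h2 h3
        subst h1; subst h2; subst h3
        exact goodAt_m ⟨by omega, by omega⟩
      | recv_u_out_le O r j r' hj hr =>
        have hcons : consistent σ := (ih ⟨i, O, r, Status.u, hsi⟩).1
        refine assemble hobs hcons hprop ?_
        rintro Ok rk sk hk
        injection hk with h1 h2 h3
        subst h1; subst h2; subst h3
        exact goodAt_u ((hprop i O r _ hsi).1 rfl)
      | recv_u_out_mid O r j r' hj h1' h2' =>
        have hcons : consistent σ := (ih ⟨i, O, r, Status.u, hsi⟩).1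
        obtain ⟨hra, hON⟩ := (hprop i O r _ hsi).1 rfl
        refine assemble hobs hcons hprop ?_
        rintro Ok rk sk hk
        injection hk with h1 h2 h3
        subst h1; subst h2; subst h3
        exact goodAt_u ⟨by omega, hON⟩
      | recv_u_out_top O r j r' hj hr =>
        have hcons : consistent σ := (ih ⟨i, O, r, Status.u, hsi⟩).1
        have hOeq : O = muddySet σ \ {i} := by
          have h := hcons.2 i; rw [hsi] at h; exact h
        obtain ⟨hra, hON⟩ := (hprop i O r _ hsi).1 rfl
        obtain ⟨Oj, rj, sj, hσj, hmatch⟩ := hc.2 _ rfl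
        have hmatch' : (Status.u = sj ∧ r' = rj) ∨ (Status.u = Status.u ∧ r' < rj) := hmatch
        have hji : j ≠ i := by
          rintro rfl
          rw [hsi] at hσj
          injection hσj with e1 e2 e3
          subst e1; subst e2; subst e3
          rcases hmatch' with ⟨_, hreq⟩ | ⟨_, hreq⟩ <;> omega
        have hjM : j ∉ muddySet σ := by
          intro hjm
          exact hj (by rw [hOeq]; exact Finset.mem_sdiff.mpr ⟨hjm, by simpa using hji⟩)
        have hOj : Oj = muddySet σ \ {j} := by
          have h := hcons.2 j; rw [hσj] at h; exact h
        have hOjc : Oj.card = (muddySet σ).card := (obs_card_facts hOj).2 hjM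
        have hpj := hprop j Oj rj sj hσj
        have hr'N : r' < (muddySet σ).card := by
          rcases hmatch' with ⟨hs, hreq⟩ | ⟨_, hreq⟩
          · subst hs
            obtain ⟨ha, hb⟩ := hpj.1 rfl
            omega
          · cases sj
            · obtain ⟨ha, hb⟩ := hpj.1 rfl; omega
            · obtain ⟨ha, hb⟩ := hpj.2.1 rfl; omega
            · obtain ⟨ha, hb⟩ := hpj.2.2 rfl; omega
        have hiM : i ∈ muddySet σ := by
          by_contra hiM
          have hOc := (obs_card_facts hOeq).2 hiM
          omega
        have hOc : O.card + 1 = (muddySet σ).card := (obs_card_facts hOeq).1 hiM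
        refine assemble hobs hcons hprop ?_
        rintro Ok rk sk hk
        injection hk with h1 h2 h3
        subst h1; subst h2; subst h3
        exact goodAt_m ⟨by omega, by omega⟩

end Aux

/-- Invariant Preservation: in every valid non-initial composite state, a child
with unknown status has round below the number of muddy children it sees (and
sees at most N muddy children), a child that knows it is muddy has round
N − 1 = |Obs|, and a child that knows it is clean has round N = |Obs|. -/
theorem muddy_invariant_preservation (n : ℕ) (hn : 1 ≤ n)
    (σ0 σ : CState n) (tr : List (Transition n))
    (htr : ValidTrace σ0 tr σ) (hni : ¬ isInitial σ)
    (N : ℕ) (hN : N = (muddySet σ).card) :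
    ∀ (i : Fin n) (O : Finset (Fin n)) (r : ℕ) (s : Status),
      σ i = ChildState.run O r s →
        (s = Status.u → r < O.card ∧ O.card ≤ N) ∧
        (s = Status.m → r = N - 1 ∧ N - 1 = O.card) ∧
        (s = Status.c → r = N ∧ N = O.card) := by
  obtain ⟨h0, hct, -⟩ := htr
  have hex : ∃ i O r s, σ i = run O r s := by
    by_contra h
    push_neg at h
    apply hni
    intro i
    cases hσi : σ i with
    | start O => exact ⟨O, rfl⟩
    | run O r s => exact absurd hσi (h i O r s)
  obtain ⟨hcons, hprop⟩ := inv_preserved h0 hct hex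
  intro i O r s hi
  subst hN
  exact hprop i O r s hi
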